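/- Let Q be a finite loop such that the right multiplication group Mlt_ρ(Q) is nilpotent. Then for every prime r dividing |Q|, there is a normal subloop of Q of index r. -/

import Mathlib

/-- A loop. -/
class LoopStr (Q : Type*) extends Mul Q, One Q where
  one_mul : ∀ a : Q, 1 * a = a
  mul_one : ∀ a : Q, a * 1 = a
  mulLeft_bij : ∀ a : Q, Function.Bijective (fun x : Q => a * x)
  mulRight_bij : ∀ a : Q, Function.Bijective (fun x : Q => x * a)

variable {Q : Type*} [LoopStr Q]

/-- The right translation `R_a : x ↦ x·a` as a permutation of `Q`. -/
noncomputable def Rt (a : Q) : Equiv.Perm Q :=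
  Equiv.ofBijective _ (LoopStr.mulRight_bij a)

/-- A subloop: a subset containing the identity and closed under
multiplication and both divisions. -/
structure Subloop (Q : Type*) [LoopStr Q] where
  carrier : Set Q
  one_mem : (1 : Q) ∈ carrier
  mul_mem : ∀ a ∈ carrier, ∀ b ∈ carrier, a * b ∈ carrier
  ldiv_mem : ∀ a ∈ carrier, ∀ b ∈ carrier, ∀ x : Q, a * x = b → x ∈ carrier
  rdiv_mem : ∀ a ∈ carrier, ∀ b ∈ carrier, ∀ x : Q, x * a = b → x ∈ carrier

/-- A subloop `S` is normal iff `xS = Sx`, `(xS)y = x(Sy)` and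
`x(yS) = (xy)S` for all `x, y`. -/
def IsNormalSubloop (S : Set Q) : Prop :=
  (∀ x : Q, (fun s => x * s) '' S = (fun s => s * x) '' S) ∧
  (∀ x y : Q, (fun s => (x * s) * y) '' S = (fun s => x * (s * y)) '' S) ∧
  (∀ x y : Q, (fun s => x * (y * s)) '' S = (fun s => (x * y) * s) '' S)

open Subgroup

theorem Equiv.Perm.inv_apply_self {α : Type*} (e : Equiv.Perm α) (x : α) : e⁻¹ (e x) = x :=
  Equiv.Perm.inv_eq_iff_eq.mpr rfl

theorem Equiv.Perm.apply_inv_self {α : Type*} (e : Equiv.Perm α) (x : α) : e (e⁻¹ x) = x :=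
  (Equiv.eq_symm_apply e).mp rfl

lemma auxMeetsCenter {G : Type*} [Group G] [Group.IsNilpotent G]
    (N : Subgroup G) [hNn : N.Normal] (hN : N ≠ ⊥) :
    N ⊓ Subgroup.center G ≠ ⊥ := by
  intro hbot
  obtain ⟨n, hn⟩ := Group.IsNilpotent.nilpotent G
  have key : ∀ k, N ⊓ Subgroup.upperCentralSeries G k = ⊥ := by
    intro k
    induction k with
    | zero => simp [Subgroup.upperCentralSeries_zero]
    | succ k ih =>
      rw [eq_bot_iff]
      intro x hx
      have hxN := hx.1
      have hxU := hx.2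
      have hcen : x ∈ Subgroup.center G := by
        rw [Subgroup.mem_center_iff]
        intro g
        have hmem : x * g * x⁻¹ * g⁻¹ ∈ N ⊓ Subgroup.upperCentralSeries G k := by
          constructor
          · have h2 : g * x⁻¹ * g⁻¹ ∈ N := by
              simpa [mul_assoc] using hNn.conj_mem x⁻¹ (N.inv_mem hxN) g
            simpa [mul_assoc] using N.mul_mem hxN h2
          · exact (Subgroup.mem_upperCentralSeries_succ_iff).mp hxU g
        rw [ih] at hmem
        have h1 : x * g * x⁻¹ * g⁻¹ = 1 := by simpa using hmem
        open scoped commutatorElement in have h2 : ⁅x, g⁆ = 1 := by rwa [commutatorElement_def]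
        open scoped commutatorElement in exact (commutatorElement_eq_one_iff_mul_comm.mp h2).symm
      have h3 : x ∈ N ⊓ Subgroup.center G := ⟨hxN, hcen⟩
      rw [hbot] at h3
      simpa using h3
  apply hN
  have h4 := key n
  rwa [hn, inf_top_eq] at h4

lemma auxCentralPrime {G : Type*} [Group G] [Finite G] [Group.IsNilpotent G]
    {q : ℕ} (hq : q.Prime) (hdvd : q ∣ Nat.card G) :
    ∃ z ∈ Subgroup.center G, orderOf z = q := by
  haveI : Fact q.Prime := ⟨hq⟩
  obtain ⟨P⟩ : Nonempty (Sylow q G) := inferInstance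
  haveI hPnorm : (P : Subgroup G).Normal :=
    Sylow.normal_of_normalizerCondition normalizerCondition_of_isNilpotent P
  have hcardP : Nat.card (P : Subgroup G) = q ^ (Nat.card G).factorization q :=
    P.card_eq_multiplicity
  have hPbot : (P : Subgroup G) ≠ ⊥ := by
    intro h
    rw [h] at hcardP
    simp at hcardP
    have hv : 0 < (Nat.card G).factorization q :=
      Nat.Prime.factorization_pos_of_dvd hq Nat.card_pos.ne' hdvd
    have h1 : 1 < q ^ (Nat.card G).factorization q := Nat.one_lt_pow hv.ne' hq.one_lt
    omega
  have hmeet := auxMeetsCenter (P : Subgroup G) hPbot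
  -- the intersection is a nontrivial q-group
  set Z := (P : Subgroup G) ⊓ Subgroup.center G with hZ
  have hZcard : Nat.card Z ∣ q ^ (Nat.card G).factorization q := by
    rw [← hcardP]; exact card_dvd_of_le inf_le_left
  obtain ⟨m, hmle, hmcard⟩ := (Nat.dvd_prime_pow hq).mp hZcard
  have hm0 : m ≠ 0 := by
    intro h
    rw [h, pow_zero] at hmcard
    exact hmeet (Subgroup.eq_bot_of_card_eq _ hmcard)
  have hqZ : q ∣ Nat.card Z := by
    rw [hmcard]
    exact dvd_pow_self q hm0
  obtain ⟨z, hz⟩ := exists_prime_orderOf_dvd_card' (G := Z) q hqZ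
  refine ⟨(z : G), z.2.2, ?_⟩
  rw [← hz]
  exact orderOf_injective Z.subtype Z.subtype_injective z

universe u

lemma auxZpowersNormal {G : Type*} [Group G] {z : G} (hz : z ∈ Subgroup.center G) :
    (Subgroup.zpowers z).Normal := by
  constructor
  intro n hn g
  obtain ⟨k, rfl⟩ := Subgroup.mem_zpowers_iff.mp hn
  have hc : g * z ^ k * g⁻¹ = z ^ k := by
    have hw := Subgroup.zpow_mem (Subgroup.center G) hz k
    rw [Subgroup.mem_center_iff.mp hw g, mul_inv_cancel_right]
  rw [hc]
  exact Subgroup.zpow_mem _ (Subgroup.mem_zpowers z) k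

lemma auxLemA {r : ℕ} (hr : r.Prime) :
    ∀ (n : ℕ) (G : Type u) [Group G] [Finite G] [Group.IsNilpotent G] (H : Subgroup G),
      Nat.card G + H.index ≤ n → r ∣ H.index →
      ∃ M : Subgroup G, M.Normal ∧ H ≤ M ∧ M.index = r := by
  intro n
  induction n with
  | zero =>
    intro G _ _ _ H hle _
    have := Nat.card_pos (α := G)
    omega
  | succ n ih =>
    intro G _ _ _ H hle hdvd
    have hind0 : H.index ≠ 0 := Subgroup.index_ne_zero_of_finite
    by_cases hir : H.index = r
    · -- H is a coatom, hence normal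
      have hco : IsCoatom H := by
        constructor
        · intro htop
          rw [htop, Subgroup.index_top] at hir
          exact hr.one_lt.ne hir
        · intro K hK
          have hle' : H ≤ K := le_of_lt hK
          have hmul := Subgroup.relIndex_mul_index hle'
          rw [hir] at hmul
          have hrel1 : H.relIndex K ≠ 1 := by
            intro h1
            exact hK.ne (le_antisymm hle' (Subgroup.relIndex_eq_one.mp h1))
          have : K.index = 1 := by
            rcases (Nat.Prime.eq_one_or_self_of_dvd hr _ ⟨H.relIndex K, by linarith [hmul]⟩ : K.index = 1 ∨ K.index = r) with h | h
            · exact h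
            · exfalso
              rw [h] at hmul
              have : H.relIndex K = 1 := by
                have hrpos := hr.pos
                nlinarith [hmul]
              exact hrel1 this
          exact Subgroup.index_eq_one.mp this
      exact ⟨H, NormalizerCondition.normal_of_coatom H normalizerCondition_of_isNilpotent hco,
        le_refl H, hir⟩
    · -- pick a prime q dividing H.index / r
      obtain ⟨m, hm⟩ := hdvd
      have hm1 : m ≠ 1 := by
        intro h; rw [h, mul_one] at hm; exact hir hm
      have hm0 : m ≠ 0 := by
        intro h; rw [h, mul_zero] at hm; exact hind0 hm
      set q := m.minFac with hqdef
      have hq : q.Prime := Nat.minFac_prime hm1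
      have hqm : q ∣ m := Nat.minFac_dvd m
      have hqind : q ∣ H.index := hm ▸ Dvd.dvd.mul_left hqm r
      have hqG : q ∣ Nat.card G := hqind.trans H.index_dvd_card
      obtain ⟨z, hzc, hzo⟩ := auxCentralPrime hq hqG
      set N := Subgroup.zpowers z with hNdef
      haveI hNnorm : N.Normal := auxZpowersNormal hzc
      have hNcard : Nat.card N = q := by rw [hNdef, Nat.card_zpowers, hzo]
      have hNbot : N ≠ ⊥ := by
        intro h
        rw [h, Subgroup.card_bot] at hNcard
        exact hq.one_lt.ne hNcard
      by_cases hzH : z ∈ H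
      · -- quotient by N
        have hNleH : N ≤ H := by
          rw [hNdef]
          exact Subgroup.zpowers_le.mpr hzH
        let f := QuotientGroup.mk' N
        have hfsurj : Function.Surjective f := QuotientGroup.mk'_surjective N
        haveI : Group.IsNilpotent (G ⧸ N) := nilpotent_of_surjective f hfsurj
        have hindmap : (H.map f).index = H.index := by
          rw [Subgroup.index_map, QuotientGroup.ker_mk']
          have h1 : H ⊔ N = H := sup_eq_left.mpr hNleH
          rw [h1]
          have h2 : (f : G →* G ⧸ N).range = ⊤ := MonoidHom.range_eq_top.mpr hfsurj
          rw [h2, Subgroup.index_top, mul_one]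
        have hcardlt : Nat.card (G ⧸ N) < Nat.card G := by
          have h1 : Nat.card (G ⧸ N) * Nat.card N = Nat.card G :=
            (Subgroup.card_eq_card_quotient_mul_card_subgroup N).symm
          have h2 : 1 < Nat.card N := hNcard ▸ hq.one_lt
          have h3 : 0 < Nat.card (G ⧸ N) := Nat.card_pos
          nlinarith
        obtain ⟨M', hM'norm, hM'le, hM'ind⟩ := ih (G ⧸ N) (H.map f)
          (by rw [hindmap]; omega) (by rw [hindmap, hm]; exact Dvd.intro m rfl)
        refine ⟨M'.comap f, Subgroup.Normal.comap hM'norm f, ?_, ?_⟩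
        · exact le_trans (Subgroup.le_comap_map f H) (Subgroup.comap_mono hM'le)
        · rw [Subgroup.index_comap_of_surjective _ hfsurj, hM'ind]
      · -- K := H ⊔ N, relIndex q
        set K := H ⊔ N with hKdef
        have hHK : H ≤ K := le_sup_left
        have hNK : N ≤ K := le_sup_right
        have hNH : N ⊓ H = ⊥ := by
          rw [eq_bot_iff]
          intro x hx
          have hx1 : x ∈ N := hx.1
          have hcard : Nat.card (N ⊓ H : Subgroup G) ∣ q := by
            rw [← hNcard]
            exact Subgroup.card_dvd_of_le inf_le_left
          rcases (Nat.Prime.eq_one_or_self_of_dvd hq _ hcard) with h | h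
          · have hb := Subgroup.eq_bot_of_card_eq _ h
            rwa [hb] at hx
          · exfalso
            have heq : N ⊓ H = N := by
              apply Subgroup.eq_of_le_of_card_ge inf_le_left
              rw [h, hNcard]
            have hzz : z ∈ N ⊓ H := by rw [heq]; exact Subgroup.mem_zpowers z
            exact hzH hzz.2
        -- card K = q * card H  and  relIndex H K = q
        have hNrelH : N.relIndex H = Nat.card H := by
          rw [Subgroup.relIndex, Subgroup.subgroupOf, ← Subgroup.index_bot]
          congr 1
          rw [eq_bot_iff]
          intro x hx
          have : (x : G) ∈ N ⊓ H := ⟨hx, x.2⟩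
          rw [hNH] at this
          simpa [Subgroup.mem_bot] using this
        have hNrelK : N.relIndex K = Nat.card H := by
          rw [hKdef, Subgroup.relIndex_sup_right, hNrelH]
        have hcardK : Nat.card K = q * Nat.card H := by
          have h1 := Subgroup.relIndex_mul_index hNK
          have h2 : Nat.card (N.subgroupOf K) = q := by
            rw [← hNcard]
            exact Nat.card_congr (Subgroup.subgroupOfEquivOfLe hNK).toEquiv
          have h3 : Nat.card (N.subgroupOf K) * (N.subgroupOf K).index = Nat.card K :=
            Subgroup.card_mul_index _
          rw [h2] at h3
          have h4 : (N.subgroupOf K).index = Nat.card H := hNrelK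
          rw [← h3, h4]
        have hrelHK : H.relIndex K = q := by
          have h2 : Nat.card (H.subgroupOf K) = Nat.card H := by
            exact Nat.card_congr (Subgroup.subgroupOfEquivOfLe hHK).toEquiv
          have h3 : Nat.card (H.subgroupOf K) * (H.subgroupOf K).index = Nat.card K :=
            Subgroup.card_mul_index _
          rw [h2, hcardK] at h3
          have hHpos : 0 < Nat.card H := Nat.card_pos
          have h4 : Nat.card H * (H.subgroupOf K).index = Nat.card H * q := by
            rw [h3]; ring
          exact Nat.eq_of_mul_eq_mul_left hHpos h4
        have hKindex : q * K.index = H.index := by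
          rw [← hrelHK]
          exact Subgroup.relIndex_mul_index hHK
        have hrK : r ∣ K.index := by
          obtain ⟨m', hm'⟩ := hqm
          have h5 : q * K.index = q * (r * m') := by rw [hKindex, hm, hm']; ring
          exact ⟨m', Nat.eq_of_mul_eq_mul_left hq.pos h5⟩
        have hKlt : K.index < H.index := by
          have := hKindex
          have hq1 := hq.one_lt
          have hKpos : 0 < K.index := Nat.pos_of_ne_zero Subgroup.index_ne_zero_of_finite
          nlinarith
        obtain ⟨M, hMnorm, hMle, hMind⟩ := ih G K (by omega) hrK
        exact ⟨M, hMnorm, le_trans hHK hMle, hMind⟩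

namespace LoopAux

lemma Rt_apply (a x : Q) : Rt a x = x * a := rfl
lemma lone_mul (a : Q) : 1 * a = a := LoopStr.one_mul a
lemma lmul_one (a : Q) : a * 1 = a := LoopStr.mul_one a

section

variable (G : Subgroup (Equiv.Perm Q))

@[simp] lemma coeMul (g h : G) : ((g * h : G) : Equiv.Perm Q) = (g : Equiv.Perm Q) * h := rfl
@[simp] lemma coeInv (g : G) : ((g⁻¹ : G) : Equiv.Perm Q) = (g : Equiv.Perm Q)⁻¹ := rfl

variable (hG : ∀ a : Q, Rt a ∈ G)

/-- right translation as an element of `G` -/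
noncomputable def RtG (a : Q) : G := ⟨Rt a, hG a⟩

@[simp] lemma RtG_coe (a : Q) : ((RtG G hG a : G) : Equiv.Perm Q) = Rt a := rfl

/-- the stabilizer of `1` -/
def stab : Subgroup G where
  carrier := {g | (g : Equiv.Perm Q) 1 = 1}
  one_mem' := rfl
  mul_mem' := by
    intro a b ha hb
    simp only [Set.mem_setOf_eq, coeMul, Equiv.Perm.mul_apply] at *
    rw [hb, ha]
  inv_mem' := by
    intro a ha
    simp only [Set.mem_setOf_eq, coeInv] at *
    rw [Equiv.Perm.inv_def, Equiv.symm_apply_eq]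
    exact ha.symm

lemma mem_stab {g : G} : g ∈ stab G ↔ (g : Equiv.Perm Q) 1 = 1 := Iff.rfl

lemma same_one_mem {g g' : G} (h : (g : Equiv.Perm Q) 1 = (g' : Equiv.Perm Q) 1) :
    g⁻¹ * g' ∈ stab G := by
  rw [mem_stab]
  simp only [coeMul, coeInv, Equiv.Perm.mul_apply]
  rw [← h, Equiv.Perm.inv_apply_self]

lemma move_mem (M : Subgroup G) (hle : stab G ≤ M) (g : G) {s : Q} (hs : RtG G hG s ∈ M) :
    g⁻¹ * RtG G hG ((g : Equiv.Perm Q) s) ∈ M := by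
  have h1 : (g * RtG G hG s)⁻¹ * RtG G hG ((g : Equiv.Perm Q) s) ∈ stab G := by
    apply same_one_mem
    simp only [coeMul, Equiv.Perm.mul_apply, RtG_coe, Rt_apply, lone_mul]
  have h2 : g⁻¹ * RtG G hG ((g : Equiv.Perm Q) s)
      = RtG G hG s * ((g * RtG G hG s)⁻¹ * RtG G hG ((g : Equiv.Perm Q) s)) := by
    group
  rw [h2]
  exact M.mul_mem hs (hle h1)

/-- the candidate normal subloop -/
def SS (M : Subgroup G) : Set Q := {x | RtG G hG x ∈ M}

lemma mem_SS_iff (M : Subgroup G) (hle : stab G ≤ M) {x : Q} :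
    x ∈ SS G hG M ↔ ∃ m ∈ M, ((m : G) : Equiv.Perm Q) 1 = x := by
  constructor
  · intro hx
    exact ⟨RtG G hG x, hx, by rw [RtG_coe, Rt_apply, lone_mul]⟩
  · rintro ⟨m, hm, hm1⟩
    have h1 : m⁻¹ * RtG G hG x ∈ stab G := by
      apply same_one_mem
      rw [hm1, RtG_coe, Rt_apply, lone_mul]
    have h2 : RtG G hG x = m * (m⁻¹ * RtG G hG x) := by group
    rw [SS, Set.mem_setOf_eq, h2]
    exact M.mul_mem hm (hle h1)

/-- orbit of a point under M -/
def Orb (M : Subgroup G) (y : Q) : Set Q := {z | ∃ m ∈ M, ((m : G) : Equiv.Perm Q) y = z}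

lemma SS_eq_Orb_one (M : Subgroup G) (hle : stab G ≤ M) : SS G hG M = Orb G M 1 := by
  ext x
  rw [Orb, Set.mem_setOf_eq]
  exact mem_SS_iff G hG M hle

include hG in
lemma fix_mem (M : Subgroup G) (hle : stab G ≤ M) (hMn : M.Normal) {g : G} {y : Q}
    (h : (g : Equiv.Perm Q) y = y) : g ∈ M := by
  have h1 : (RtG G hG y)⁻¹ * g * RtG G hG y ∈ stab G := by
    rw [mem_stab]
    simp only [coeMul, coeInv, Equiv.Perm.mul_apply, RtG_coe, Rt_apply, lone_mul, h]
    rw [Equiv.Perm.inv_def, Equiv.symm_apply_eq]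
    exact (lone_mul y).symm
  have h2 : g = RtG G hG y * ((RtG G hG y)⁻¹ * g * RtG G hG y) * (RtG G hG y)⁻¹ := by group
  rw [h2]
  exact hMn.conj_mem _ (hle h1) _

lemma orb_coset (M : Subgroup G) (hle : stab G ≤ M) (hMn : M.Normal) {u y : Q}
    (hu : u ∈ Orb G M y) : ∃ m ∈ M, RtG G hG u = m * RtG G hG y := by
  obtain ⟨m₀, hm₀, hm₀y⟩ := hu
  have h1 : ((m₀ : G) * RtG G hG y)⁻¹ * RtG G hG u ∈ stab G := by
    apply same_one_mem
    simp only [coeMul, Equiv.Perm.mul_apply, RtG_coe, Rt_apply, lone_mul, hm₀y]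
  set h := ((m₀ : G) * RtG G hG y)⁻¹ * RtG G hG u with hh
  have h2 : RtG G hG u = m₀ * (RtG G hG y * h * (RtG G hG y)⁻¹) * RtG G hG y := by
    rw [hh]; group
  exact ⟨m₀ * (RtG G hG y * h * (RtG G hG y)⁻¹),
    M.mul_mem hm₀ (hMn.conj_mem _ (hle h1) _), h2⟩

include hG in
lemma image_mul_left_orb (M : Subgroup G) (hle : stab G ≤ M) (hMn : M.Normal) (x y : Q) :
    (fun u => x * u) '' Orb G M y = Orb G M (x * y) := by
  ext w
  constructor
  · rintro ⟨u, hu, rfl⟩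
    obtain ⟨m, hm, hmu⟩ := orb_coset G hG M hle hMn hu
    refine ⟨m, hm, ?_⟩
    have h3 : ((RtG G hG u : G) : Equiv.Perm Q) x = ((m * RtG G hG y : G) : Equiv.Perm Q) x := by
      rw [hmu]
    simp only [RtG_coe, Rt_apply, coeMul, Equiv.Perm.mul_apply] at h3
    rw [← h3]
  · rintro ⟨m, hm, rfl⟩
    obtain ⟨u, hu⟩ := (LoopStr.mulLeft_bij x).surjective
      (((m : G) : Equiv.Perm Q) (x * y))
    simp only at hu
    refine ⟨u, ?_, hu⟩
    have hfix : ((m : G) * RtG G hG y)⁻¹ * RtG G hG u ∈ M := by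
      apply fix_mem G hG M hle hMn (y := x)
      simp only [coeMul, coeInv, Equiv.Perm.mul_apply, RtG_coe, Rt_apply]
      rw [hu]
      have : (x : Q) * y = Rt y x := rfl
      rw [this, ← Equiv.Perm.mul_apply ((m : G) : Equiv.Perm Q) (Rt y),
        Equiv.Perm.inv_apply_self]
    set h := ((m : G) * RtG G hG y)⁻¹ * RtG G hG u with hh
    have h2 : RtG G hG u = (m * (RtG G hG y * h * (RtG G hG y)⁻¹)) * RtG G hG y := by
      rw [hh]; group
    refine ⟨m * (RtG G hG y * h * (RtG G hG y)⁻¹), ?_, ?_⟩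
    · exact M.mul_mem hm (hMn.conj_mem _ hfix _)
    · -- evaluate h2 at 1
      have h4 := congrArg (fun (g : G) => ((g : G) : Equiv.Perm Q) 1) h2
      simp only [coeMul, Equiv.Perm.mul_apply, RtG_coe, Rt_apply, lone_mul] at h4
      exact h4.symm

include hG in
lemma image_mul_right_orb (M : Subgroup G) (hle : stab G ≤ M) (hMn : M.Normal) (x y : Q) :
    (fun u => u * x) '' Orb G M y = Orb G M (y * x) := by
  ext w
  constructor
  · rintro ⟨u, hu, rfl⟩
    obtain ⟨m, hm, hmy⟩ := hu
    refine ⟨RtG G hG x * m * (RtG G hG x)⁻¹, hMn.conj_mem _ hm _, ?_⟩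
    simp only [coeMul, coeInv, Equiv.Perm.mul_apply, RtG_coe]
    rw [show (y : Q) * x = Rt x y from rfl, Equiv.Perm.inv_apply_self, hmy]
    rfl
  · rintro ⟨m, hm, rfl⟩
    refine ⟨(((RtG G hG x)⁻¹ * m * RtG G hG x : G) : Equiv.Perm Q) y,
      ⟨_, hMn.conj_mem' _ hm _, rfl⟩, ?_⟩
    simp only [coeMul, coeInv, Equiv.Perm.mul_apply, RtG_coe]
    rw [show ∀ t : Q, t * x = Rt x t from fun t => rfl, Equiv.Perm.apply_inv_self]
    rw [show (y : Q) * x = Rt x y from rfl]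

noncomputable def cosetEquiv (M : Subgroup G) (hle : stab G ≤ M) :
    ((↥G ⧸ M) × {x : Q // x ∈ SS G hG M}) ≃ Q := by
  apply Equiv.ofBijective
    (fun p => ((Quotient.out p.1 : ↥G) : Equiv.Perm Q) (p.2 : Q))
  constructor
  · rintro ⟨c, s, hs⟩ ⟨c', s', hs'⟩ hEq
    simp only at hEq
    have h1 : (Quotient.out c)⁻¹
        * RtG G hG (((Quotient.out c : ↥G) : Equiv.Perm Q) s) ∈ M :=
      move_mem G hG M hle _ hs
    have h2 : (Quotient.out c')⁻¹
        * RtG G hG (((Quotient.out c' : ↥G) : Equiv.Perm Q) s') ∈ M :=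
      move_mem G hG M hle _ hs'
    rw [hEq] at h1
    have hcc : c = c' := by
      rw [← QuotientGroup.out_eq' c, ← QuotientGroup.out_eq' c', QuotientGroup.eq]
      have h3 : (Quotient.out c)⁻¹ * Quotient.out c'
          = ((Quotient.out c)⁻¹ * RtG G hG (((Quotient.out c' : ↥G) : Equiv.Perm Q) s'))
            * ((Quotient.out c')⁻¹
              * RtG G hG (((Quotient.out c' : ↥G) : Equiv.Perm Q) s'))⁻¹ := by group
      rw [h3]
      exact M.mul_mem h1 (M.inv_mem h2)
    subst hcc
    have hss : s = s' := (Equiv.injective _) hEq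
    subst hss
    rfl
  · intro x
    set c : ↥G ⧸ M := QuotientGroup.mk (RtG G hG x) with hc
    have hmkeq : QuotientGroup.mk (s := M) (Quotient.out c)
        = QuotientGroup.mk (s := M) (RtG G hG x) := by
      rw [QuotientGroup.out_eq']
    have hm : (Quotient.out c)⁻¹ * RtG G hG x ∈ M := QuotientGroup.eq.mp hmkeq
    refine ⟨⟨c, ⟨(((Quotient.out c)⁻¹ * RtG G hG x : ↥G) : Equiv.Perm Q) 1,
      (mem_SS_iff G hG M hle).mpr ⟨_, hm, rfl⟩⟩⟩, ?_⟩
    simp only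
    rw [← Equiv.Perm.mul_apply, ← coeMul]
    have h4 : Quotient.out c * ((Quotient.out c)⁻¹ * RtG G hG x) = RtG G hG x := by group
    rw [h4, RtG_coe, Rt_apply, lone_mul]

lemma card_eq [Fintype Q] (M : Subgroup G) (hle : stab G ≤ M) :
    (SS G hG M).ncard * M.index = Fintype.card Q := by
  have h1 : Nat.card ((↥G ⧸ M) × {x : Q // x ∈ SS G hG M}) = Nat.card Q :=
    Nat.card_congr (cosetEquiv G hG M hle)
  have h2 : Nat.card (↥G ⧸ M) = M.index := rfl
  have h3 : Nat.card {x : Q // x ∈ SS G hG M} = (SS G hG M).ncard :=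
    Nat.card_coe_set_eq _
  rw [Nat.card_prod, h2, h3] at h1
  rw [← Nat.card_eq_fintype_card, ← h1, mul_comm]

lemma SS_stab : SS G hG (stab G) = {(1 : Q)} := by
  ext x
  simp only [SS, Set.mem_setOf_eq, mem_stab, RtG_coe, Rt_apply, lone_mul,
    Set.mem_singleton_iff]

include hG in
lemma stab_index [Fintype Q] : (stab G).index = Fintype.card Q := by
  have := card_eq G hG (stab G) (le_refl _)
  rwa [SS_stab, Set.ncard_singleton, one_mul] at this


lemma SS_one (M : Subgroup G) (hle : stab G ≤ M) : (1 : Q) ∈ SS G hG M := by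
  apply hle
  rw [mem_stab, RtG_coe, Rt_apply]
  exact lone_mul 1

lemma SS_mul (M : Subgroup G) (hle : stab G ≤ M) {a b : Q}
    (ha : a ∈ SS G hG M) (hb : b ∈ SS G hG M) : a * b ∈ SS G hG M := by
  refine (mem_SS_iff G hG M hle).mpr ⟨RtG G hG b * RtG G hG a, M.mul_mem hb ha, ?_⟩
  simp only [coeMul, Equiv.Perm.mul_apply, RtG_coe, Rt_apply, lone_mul]

lemma SS_ldiv (M : Subgroup G) (hle : stab G ≤ M) {a b x : Q}
    (ha : a ∈ SS G hG M) (hb : b ∈ SS G hG M) (h : a * x = b) : x ∈ SS G hG M := by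
  have h1 : (RtG G hG b)⁻¹ * (RtG G hG x * RtG G hG a) ∈ stab G := by
    rw [mem_stab]
    simp only [coeMul, coeInv, Equiv.Perm.mul_apply, RtG_coe, Rt_apply, lone_mul, h]
    rw [Equiv.Perm.inv_def, Equiv.symm_apply_eq, Rt_apply]
    exact (lone_mul b).symm
  have h2 : RtG G hG x
      = RtG G hG b * ((RtG G hG b)⁻¹ * (RtG G hG x * RtG G hG a)) * (RtG G hG a)⁻¹ := by
    group
  show RtG G hG x ∈ M
  rw [h2]
  exact M.mul_mem (M.mul_mem hb (hle h1)) (M.inv_mem ha)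

lemma SS_rdiv (M : Subgroup G) (hle : stab G ≤ M) {a b x : Q}
    (ha : a ∈ SS G hG M) (hb : b ∈ SS G hG M) (h : x * a = b) : x ∈ SS G hG M := by
  refine (mem_SS_iff G hG M hle).mpr
    ⟨(RtG G hG a)⁻¹ * RtG G hG b, M.mul_mem (M.inv_mem ha) hb, ?_⟩
  simp only [coeMul, coeInv, Equiv.Perm.mul_apply, RtG_coe, Rt_apply, lone_mul]
  rw [Equiv.Perm.inv_def, Equiv.symm_apply_eq, Rt_apply]
  exact h.symm

end
end LoopAux


namespace LoopAux
section
variable (G : Subgroup (Equiv.Perm Q)) (hG : ∀ a : Q, Rt a ∈ G)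

include hG in
lemma SS_normal (M : Subgroup G) (hle : stab G ≤ M) (hMn : M.Normal) :
    IsNormalSubloop (SS G hG M) := by
  refine ⟨?_, ?_, ?_⟩
  · intro x
    rw [SS_eq_Orb_one G hG M hle, image_mul_left_orb G hG M hle hMn,
      image_mul_right_orb G hG M hle hMn, lmul_one, lone_mul]
  · intro x y
    rw [SS_eq_Orb_one G hG M hle]
    have h1 : (fun s => (x * s) * y) '' Orb G M 1
        = (fun t => t * y) '' ((fun s => x * s) '' Orb G M 1) := by
      rw [Set.image_image]
    have h2 : (fun s => x * (s * y)) '' Orb G M 1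
        = (fun t => x * t) '' ((fun s => s * y) '' Orb G M 1) := by
      rw [Set.image_image]
    rw [h1, h2, image_mul_left_orb G hG M hle hMn, image_mul_right_orb G hG M hle hMn,
      image_mul_right_orb G hG M hle hMn, image_mul_left_orb G hG M hle hMn,
      lmul_one, lone_mul]
  · intro x y
    rw [SS_eq_Orb_one G hG M hle]
    have h1 : (fun s => x * (y * s)) '' Orb G M 1
        = (fun t => x * t) '' ((fun s => y * s) '' Orb G M 1) := by
      rw [Set.image_image]
    rw [h1, image_mul_left_orb G hG M hle hMn, image_mul_left_orb G hG M hle hMn,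
      image_mul_left_orb G hG M hle hMn, lmul_one, lmul_one]

end
end LoopAux

/-- Let `Q` be a finite loop whose right multiplication group is nilpotent.
Then for every prime `r` dividing `|Q|` there is a normal subloop of `Q` of
index `r` (i.e. of order `|Q|/r`). -/
theorem stmt14 [Fintype Q]
    (hnil : Group.IsNilpotent ↥(Subgroup.closure (Set.range (Rt : Q → Equiv.Perm Q))))
    (r : ℕ) (hr : r.Prime) (hdvd : r ∣ Fintype.card Q) :
    ∃ S : Subloop Q, IsNormalSubloop S.carrier ∧
      S.carrier.ncard * r = Fintype.card Q := by
  classical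
  set G : Subgroup (Equiv.Perm Q) :=
    Subgroup.closure (Set.range (Rt : Q → Equiv.Perm Q)) with hGdef
  have hG : ∀ a : Q, Rt a ∈ G := fun a => Subgroup.subset_closure ⟨a, rfl⟩
  haveI : Group.IsNilpotent ↥G := hnil
  haveI : Finite ↥G := Subtype.finite
  have hstab : (LoopAux.stab G).index = Fintype.card Q := LoopAux.stab_index G hG
  obtain ⟨M, hMnorm, hMle, hMind⟩ := auxLemA hr (Nat.card ↥G + (LoopAux.stab G).index)
    ↥G (LoopAux.stab G) (le_refl _) (by rw [hstab]; exact hdvd)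
  refine ⟨⟨LoopAux.SS G hG M, LoopAux.SS_one G hG M hMle,
    fun a ha b hb => LoopAux.SS_mul G hG M hMle ha hb,
    fun a ha b hb x hx => LoopAux.SS_ldiv G hG M hMle ha hb hx,
    fun a ha b hb x hx => LoopAux.SS_rdiv G hG M hMle ha hb hx⟩,
    LoopAux.SS_normal G hG M hMle hMnorm, ?_⟩
  have hcard := LoopAux.card_eq G hG M hMle
  rwa [hMind] at hcard
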